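/- For the pure states u = (|00⟩ + |11⟩)/√2 and v = cos(π/8)|00⟩ + sin(π/8)|11⟩ in ℂ²⊗ℂ², and any quantum channel Φ on the first qubit, the probability ⟨vv*, (Φ⊗id)(uu*)⟩ is at most cos²(π/8). -/

import Mathlib

open Matrix
open scoped Kronecker ComplexOrder

noncomputable section

/-- `Φ ⊗ id` : apply a linear map `Φ` on `L(X)` to the first tensor factor of `L(X ⊗ Z)`. -/
def lmapTensorId {n m k : Type*} [Fintype n] [Fintype k]
    (Φ : Matrix n n ℂ →ₗ[ℂ] Matrix m m ℂ)
    (M : Matrix (n × k) (n × k) ℂ) : Matrix (m × k) (m × k) ℂ :=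
  fun p q => Φ (fun i j => M (i, p.2) (j, q.2)) p.1 q.1

/-- `id ⊗ Ψ` : apply a linear map `Ψ` on `L(Z)` to the second tensor factor of `L(Y ⊗ Z)`. -/
def idTensorLmap {n k l : Type*} [Fintype n] [Fintype k]
    (Ψ : Matrix k k ℂ →ₗ[ℂ] Matrix l l ℂ)
    (M : Matrix (n × k) (n × k) ℂ) : Matrix (n × l) (n × l) ℂ :=
  fun p q => Ψ (fun a b => M (p.1, a) (q.1, b)) p.2 q.2

/-- Complete positivity: `Φ ⊗ id_k` maps positive semidefinite operators to positive
semidefinite operators for every finite-dimensional ancilla `k`. -/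
def IsCompletelyPositive {n m : Type*} [Fintype n] [Fintype m]
    (Φ : Matrix n n ℂ →ₗ[ℂ] Matrix m m ℂ) : Prop :=
  ∀ (k : Type) [Fintype k] [DecidableEq k],
    ∀ M : Matrix (n × k) (n × k) ℂ, M.PosSemidef → (lmapTensorId Φ M).PosSemidef

def IsTracePreserving {n m : Type*} [Fintype n] [Fintype m]
    (Φ : Matrix n n ℂ →ₗ[ℂ] Matrix m m ℂ) : Prop :=
  ∀ M : Matrix n n ℂ, (Φ M).trace = M.trace

/-- Partial trace over the first tensor factor. -/
def trFst {n k : Type*} [Fintype n] (M : Matrix (n × k) (n × k) ℂ) : Matrix k k ℂ :=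
  fun a b => ∑ i : n, M (i, a) (i, b)

/-- Partial trace over the second tensor factor. -/
def trSnd {n k : Type*} [Fintype k] (M : Matrix (n × k) (n × k) ℂ) : Matrix n n ℂ :=
  fun i j => ∑ a : k, M (i, a) (j, a)

/-- Hilbert-Schmidt inner product `⟨A, B⟩ = Tr(A* B)`. -/
def minner {n : Type*} [Fintype n] (A B : Matrix n n ℂ) : ℂ := (Aᴴ * B).trace

/-- Old Mathlib's `Matrix.PosSemidef.sqrt` (removed since), restored verbatim. -/
def Matrix.PosSemidef.sqrt {n : Type*} [Fintype n] [DecidableEq n] {A : Matrix n n ℂ}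
    (hA : A.PosSemidef) : Matrix n n ℂ :=
  (hA.1.eigenvectorUnitary : Matrix n n ℂ) * diagonal ((↑) ∘ (Real.sqrt ∘ hA.1.eigenvalues)) *
    (star hA.1.eigenvectorUnitary : Matrix n n ℂ)

open Classical in
/-- Square root of a positive semidefinite matrix (junk value `0` otherwise). -/
def msqrt {n : Type*} [Fintype n] [DecidableEq n] (M : Matrix n n ℂ) : Matrix n n ℂ :=
  if h : M.PosSemidef then h.sqrt else 0

/-- Trace norm `‖M‖₁ = Tr √(M* M)`. -/
def traceNorm {n : Type*} [Fintype n] [DecidableEq n] (M : Matrix n n ℂ) : ℝ :=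
  ((Matrix.posSemidef_conjTranspose_mul_self M).sqrt.trace).re

/-- Fidelity `F(Q, R) = ‖√Q √R‖₁` of positive semidefinite matrices. -/
def fid {n : Type*} [Fintype n] [DecidableEq n] (Q R : Matrix n n ℂ) : ℝ :=
  traceNorm (msqrt Q * msqrt R)

/-- Choi-Jamiolkowski operator `J(Φ) = Σ_{i,j} Φ(|i⟩⟨j|) ⊗ |i⟩⟨j|`. -/
def choi {n m : Type*} [Fintype n] [DecidableEq n] [Fintype m]
    (Φ : Matrix n n ℂ →ₗ[ℂ] Matrix m m ℂ) : Matrix (m × n) (m × n) ℂ :=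
  fun p q => Φ (Matrix.single p.2 q.2 1) p.1 q.1

/-- Tensor product of vectors. -/
def tensorVec {α β : Type*} (v : α → ℂ) (w : β → ℂ) : α × β → ℂ := fun p => v p.1 * w p.2

/-- `u = (|00⟩ + |11⟩)/√2`. -/
def uVec : Fin 2 × Fin 2 → ℂ := fun p =>
  if p = (0, 0) then (Real.sqrt 2 : ℂ)⁻¹ else if p = (1, 1) then (Real.sqrt 2 : ℂ)⁻¹ else 0

/-- `v = cos(π/8)|00⟩ + sin(π/8)|11⟩`. -/
def vVec : Fin 2 × Fin 2 → ℂ := fun p =>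
  if p = (0, 0) then (Real.cos (Real.pi / 8) : ℂ)
  else if p = (1, 1) then (Real.sin (Real.pi / 8) : ℂ) else 0

/-- `w = -sin(π/8)|00⟩ + cos(π/8)|11⟩`. -/
def wVec : Fin 2 × Fin 2 → ℂ := fun p =>
  if p = (0, 0) then -(Real.sin (Real.pi / 8) : ℂ)
  else if p = (1, 1) then (Real.cos (Real.pi / 8) : ℂ) else 0


lemma psd_outer {n : Type*} [Fintype n] (v : n → ℂ) :
    (vecMulVec v (star v)).PosSemidef := by
  refine posSemidef_iff_dotProduct_mulVec.mpr ⟨?_, ?_⟩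
  · ext p q
    simp [vecMulVec, mul_comm]
  · intro x
    have h : star x ⬝ᵥ (vecMulVec v (star v)) *ᵥ x
        = star (star v ⬝ᵥ x) * (star v ⬝ᵥ x) := by
      simp only [dotProduct, mulVec, vecMulVec_apply, star_sum, Pi.star_apply, RCLike.star_def,
        Finset.sum_mul_sum]
      apply Finset.sum_congr rfl; intro p _
      rw [Finset.mul_sum]
      apply Finset.sum_congr rfl; intro q _
      simp only [_root_.map_mul, Complex.conj_conj]
      ring
    rw [h]
    exact star_mul_self_nonneg _

/-- For `u = (|00⟩+|11⟩)/√2` and `v = cos(π/8)|00⟩+sin(π/8)|11⟩`, every quantum channel `Φ`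
on the first qubit satisfies `⟨vv*, (Φ ⊗ id)(uu*)⟩ ≤ cos²(π/8)`. -/
theorem stmt0 (Φ : Matrix (Fin 2) (Fin 2) ℂ →ₗ[ℂ] Matrix (Fin 2) (Fin 2) ℂ)
    (hCP : IsCompletelyPositive Φ) (hTP : IsTracePreserving Φ) :
    (minner (vecMulVec vVec (star vVec)) (lmapTensorId Φ (vecMulVec uVec (star uVec)))).re ≤
      Real.cos (Real.pi / 8) ^ 2 := by
  set c := Real.cos (Real.pi / 8) with hc
  set s := Real.sin (Real.pi / 8) with hs
  set U := vecMulVec uVec (star uVec) with hU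
  set ρ := lmapTensorId Φ U with hρdef
  have hρ : ρ.PosSemidef := hCP (Fin 2) U (psd_outer uVec)
  -- partial trace preservation
  have hTr : ∀ a b : Fin 2, (∑ i : Fin 2, ρ (i, a) (i, b)) = ∑ i : Fin 2, U (i, a) (i, b) := by
    intro a b
    have h := hTP (fun i j => U (i, a) (j, b))
    simpa [Matrix.trace, Matrix.diag, hρdef, lmapTensorId] using h
  have h2 : (Real.sqrt 2)⁻¹ * (Real.sqrt 2)⁻¹ = 1/2 := by
    rw [← mul_inv, Real.mul_self_sqrt (by norm_num : (0:ℝ) ≤ 2)]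
    norm_num
  have hE0 : ρ ((0:Fin 2), (0:Fin 2)) ((0:Fin 2), (0:Fin 2)) + ρ (1, 0) (1, 0) = 1/2 := by
    have h := hTr 0 0
    rw [Fin.sum_univ_two, Fin.sum_univ_two] at h
    rw [h]
    simp [hU, vecMulVec_apply, uVec, ← Complex.ofReal_inv, ← Complex.ofReal_mul, h2]
    norm_num
  have hE1 : ρ ((0:Fin 2), (1:Fin 2)) ((0:Fin 2), (1:Fin 2)) + ρ (1, 1) (1, 1) = 1/2 := by
    have h := hTr 1 1
    rw [Fin.sum_univ_two, Fin.sum_univ_two] at h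
    rw [h]
    simp [hU, vecMulVec_apply, uVec, ← Complex.ofReal_inv, ← Complex.ofReal_mul, h2]
    norm_num
  have hdiag : ∀ p : Fin 2 × Fin 2, 0 ≤ (ρ p p).re := by
    intro p
    have h := hρ.re_dotProduct_nonneg (fun q => if q = p then 1 else 0)
    simpa [dotProduct, mulVec, Finset.sum_ite_eq, apply_ite] using h
  have hx := hρ.re_dotProduct_nonneg
    (fun q => if q = ((0:Fin 2), (0:Fin 2)) then 1 else if q = (1, 1) then -1 else 0)
  simp only [dotProduct, mulVec, Fintype.sum_prod_type, Fin.sum_univ_two,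
    Pi.star_apply, RCLike.re_to_complex] at hx
  norm_num at hx
  have hexp : minner (vecMulVec vVec (star vVec)) ρ =
      ((c*c : ℝ) : ℂ) * ρ (0, 0) (0, 0) + ((c*s : ℝ) : ℂ) * ρ (0, 0) (1, 1) +
      ((s*c : ℝ) : ℂ) * ρ (1, 1) (0, 0) + ((s*s : ℝ) : ℂ) * ρ (1, 1) (1, 1) := by
    simp only [minner, Matrix.trace, Matrix.diag, Matrix.mul_apply, conjTranspose_apply,
      vecMulVec_apply, Pi.star_apply, Fintype.sum_prod_type, Fin.sum_univ_two]
    norm_num [vVec, Complex.conj_ofReal, hc, hs]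
    ring
  rw [hexp]
  simp only [Complex.add_re, Complex.re_ofReal_mul]
  have hE0' : (ρ ((0:Fin 2), (0:Fin 2)) ((0:Fin 2), (0:Fin 2))).re + (ρ (1, 0) (1, 0)).re = 1/2 := by
    have := congrArg Complex.re hE0
    simpa [Complex.add_re] using this
  have hE1' : (ρ ((0:Fin 2), (1:Fin 2)) ((0:Fin 2), (1:Fin 2))).re + (ρ (1, 1) (1, 1)).re = 1/2 := by
    have := congrArg Complex.re hE1
    simpa [Complex.add_re] using this
  have ha : (ρ ((0:Fin 2), (0:Fin 2)) ((0:Fin 2), (0:Fin 2))).re ≤ 1/2 := by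
    have := hdiag (1, 0); linarith
  have hd : (ρ ((1:Fin 2), (1:Fin 2)) ((1:Fin 2), (1:Fin 2))).re ≤ 1/2 := by
    have := hdiag (0, 1); linarith
  have ha0 := hdiag (0, 0)
  have hd0 := hdiag (1, 1)
  have hc0 : 0 < c := by
    rw [hc]
    apply Real.cos_pos_of_mem_Ioo
    constructor <;> nlinarith [Real.pi_pos]
  have hs0 : 0 < s := by
    rw [hs]
    apply Real.sin_pos_of_pos_of_lt_pi <;> nlinarith [Real.pi_pos]
  have hpyth : s^2 + c^2 = 1 := by rw [hs, hc]; exact Real.sin_sq_add_cos_sq _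
  have e1 := Real.cos_two_mul (Real.pi/8)
  have e2 := Real.sin_two_mul (Real.pi/8)
  rw [show 2*(Real.pi/8) = Real.pi/4 by ring] at e1 e2
  rw [Real.cos_pi_div_four] at e1
  rw [Real.sin_pi_div_four] at e2
  have h1 : 2*c^2 - 1 = 2*(s*c) := by rw [hc, hs]; linarith [e1, e2]
  nlinarith [mul_pos hc0 hs0, mul_nonneg (mul_pos hc0 hs0).le hx,
    mul_nonneg (sub_nonneg.2 ha) (mul_nonneg hc0.le (add_pos hc0 hs0).le),
    mul_nonneg (sub_nonneg.2 hd) (mul_nonneg hs0.le (add_pos hc0 hs0).le)]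

end
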